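/- Let d ∈ ℤ≥1, L ∈ 4ℤ≥1, g > 0, Λ = (ℤ/Lℤ)^d, and let Δ ∈ (0,1/2) be the unique solution of the gap equation 2 = |Λ|^{-1} Σ_{ξ∈Λ*} g (ω_ξ² + g²Δ²)^{-1/2}. Set a := |Λ|^{-1} Σ_{ξ∈Λ*} ω_ξ² / (ω_ξ² + (g/2)²). Then 1 − 4Δ² ≥ a/(1+a) ≥ a/2. -/

import Mathlib

open Matrix
open scoped Kronecker BigOperators ComplexOrder

/-- The discrete torus `Λ = (ℤ/Lℤ)^d`. -/
abbrev Lam (d L : ℕ) := Fin d → ZMod L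

/-- The dispersion relation `ω_ξ = -∑_ν cos(ξ_ν)`, with the dual lattice
`Λ* = (2π/L)(ℤ/Lℤ)^d` identified with `Λ`. -/
noncomputable def omega (d L : ℕ) (ξ : Lam d L) : ℝ :=
  - ∑ ν, Real.cos (2 * Real.pi * ((ξ ν).val : ℝ) / (L : ℝ))

/-- The torus distance of `z ∈ ℤ/Lℤ` to `0`. -/
def zdist (L : ℕ) (z : ZMod L) : ℕ := min z.val (L - z.val)

/-- The nearest-neighbour hopping matrix `T` on `ℓ²(Λ)`:
`T x y = -1` if the torus `ℓ¹`-distance of `x` and `y` is `1`, and `0` otherwise. -/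
noncomputable def hopT (d L : ℕ) [NeZero L] : Matrix (Lam d L) (Lam d L) ℂ :=
  Matrix.of fun x y => if (∑ ν, zdist L (x ν - y ν)) = 1 then (-1 : ℂ) else 0

/-- The gauge involution `G`, i.e. multiplication by `(-1)^x = (-1)^{x₁+⋯+x_d}`. -/
noncomputable def gaugeG (d L : ℕ) [NeZero L] : Matrix (Lam d L) (Lam d L) ℂ :=
  Matrix.diagonal fun x => (-1 : ℂ) ^ (∑ ν, (x ν).val)

/-- Pauli matrices. -/
noncomputable def sigma1 : Matrix (Fin 2) (Fin 2) ℂ := !![0, 1; 1, 0]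
noncomputable def sigma2 : Matrix (Fin 2) (Fin 2) ℂ := !![0, Complex.I; -Complex.I, 0]
noncomputable def sigma3 : Matrix (Fin 2) (Fin 2) ℂ := !![1, 0; 0, -1]

/-- `a⃗ · σ⃗` for a vector `a⃗ ∈ ℝ³`. -/
noncomputable def pauliDot (a : EuclideanSpace ℝ (Fin 3)) : Matrix (Fin 2) (Fin 2) ℂ :=
  (a 0 : ℂ) • sigma1 + (a 1 : ℂ) • sigma2 + (a 2 : ℂ) • sigma3

/-- The 2×2 spin block `γ_x` of a one-particle density matrix on `ℓ²(Λ)⊗ℂ²`. -/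
noncomputable def spinBlock {d L : ℕ} [NeZero L]
    (γ : Matrix (Lam d L × Fin 2) (Lam d L × Fin 2) ℂ) (x : Lam d L) :
    Matrix (Fin 2) (Fin 2) ℂ :=
  Matrix.of fun σ τ => γ (x, σ) (x, τ)

/-- The Hartree--Fock functional
`𝓔_HF(γ) = Tr[(T⊗1)γ] + (g/2) ∑_x (ρ_x² - |v⃗_x|²)`. -/
noncomputable def Ehf (d L : ℕ) [NeZero L] (g : ℝ)
    (γ : Matrix (Lam d L × Fin 2) (Lam d L × Fin 2) ℂ) : ℝ :=
  (((hopT d L) ⊗ₖ (1 : Matrix (Fin 2) (Fin 2) ℂ)) * γ).trace.re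
    + g / 2 * ∑ x : Lam d L,
      (((spinBlock γ x).trace.re) ^ 2
        - (((sigma1 * spinBlock γ x).trace.re) ^ 2
            + ((sigma2 * spinBlock γ x).trace.re) ^ 2
            + ((sigma3 * spinBlock γ x).trace.re) ^ 2))

/-- The constraint set `0 ≤ γ ≤ 1`, `Tr γ = N` of reduced one-particle density matrices. -/
def IsOPDM {d L : ℕ} [NeZero L] (N : ℕ)
    (γ : Matrix (Lam d L × Fin 2) (Lam d L × Fin 2) ℂ) : Prop :=
  γ.PosSemidef ∧ ((1 : Matrix (Lam d L × Fin 2) (Lam d L × Fin 2) ℂ) - γ).PosSemidef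
    ∧ γ.trace = (N : ℂ)

/-- Spectral projection `1[A < 0]` onto the negative eigenvalues of a Hermitian matrix
(junk value `0` if `A` is not Hermitian). -/
noncomputable def specProjNeg {n : Type*} [Fintype n] [DecidableEq n]
    (A : Matrix n n ℂ) : Matrix n n ℂ :=
  if hA : A.IsHermitian then
    (hA.eigenvectorUnitary : Matrix n n ℂ)
      * Matrix.diagonal (fun i => if hA.eigenvalues i < 0 then (1 : ℂ) else 0)
      * star (hA.eigenvectorUnitary : Matrix n n ℂ)
  else 0

/-- Spectral projection `1[A ≤ 0]` onto the nonpositive eigenvalues of a Hermitian matrix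
(junk value `0` if `A` is not Hermitian). -/
noncomputable def specProjNonpos {n : Type*} [Fintype n] [DecidableEq n]
    (A : Matrix n n ℂ) : Matrix n n ℂ :=
  if hA : A.IsHermitian then
    (hA.eigenvectorUnitary : Matrix n n ℂ)
      * Matrix.diagonal (fun i => if hA.eigenvalues i ≤ 0 then (1 : ℂ) else 0)
      * star (hA.eigenvectorUnitary : Matrix n n ℂ)
  else 0

/-- The positive square root `√A` of a positive semidefinite Hermitian matrix
(junk value `0` if `A` is not Hermitian). -/
noncomputable def matSqrt {n : Type*} [Fintype n] [DecidableEq n]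
    (A : Matrix n n ℂ) : Matrix n n ℂ :=
  if hA : A.IsHermitian then
    (hA.eigenvectorUnitary : Matrix n n ℂ)
      * Matrix.diagonal (fun i => (Real.sqrt (hA.eigenvalues i) : ℂ))
      * star (hA.eigenvectorUnitary : Matrix n n ℂ)
  else 0

/-- The negative part `A₋ = (A - |A|)/2` of a Hermitian matrix, i.e. the spectral
function `λ ↦ min λ 0` applied to `A` (junk value `0` if `A` is not Hermitian). -/
noncomputable def matNegPart {n : Type*} [Fintype n] [DecidableEq n]
    (A : Matrix n n ℂ) : Matrix n n ℂ :=
  if hA : A.IsHermitian then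
    (hA.eigenvectorUnitary : Matrix n n ℂ)
      * Matrix.diagonal (fun i => ((min (hA.eigenvalues i) 0 : ℝ) : ℂ))
      * star (hA.eigenvectorUnitary : Matrix n n ℂ)
  else 0

/-- The sign `(-1)^x = (-1)^{x₁+⋯+x_d}` of a lattice site, as a real number. -/
noncomputable def latSign {d L : ℕ} (x : Lam d L) : ℝ := (-1 : ℝ) ^ (∑ ν, (x ν).val)

/-- The spin values `↑ ≡ +1`, `↓ ≡ -1`. -/
noncomputable def spinVal (τ : Fin 2) : ℝ := if τ = 0 then 1 else -1
/-- For the solution `Δ ∈ (0,1/2)` of the gap equation one has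
`1 − 4Δ² ≥ a/(1+a) ≥ a/2` where `a = |Λ|⁻¹ Σ_ξ ω_ξ²/(ω_ξ² + (g/2)²)`. -/
theorem gap_solution_lower_bound (d L : ℕ) [NeZero L] (hd : 1 ≤ d)
    (hL : ∃ m : ℕ, 1 ≤ m ∧ L = 4 * m) (g : ℝ) (hg : 0 < g)
    (Δ : ℝ) (hΔ : Δ ∈ Set.Ioo (0 : ℝ) (1/2))
    (hgap : (2 : ℝ) = ((L : ℝ) ^ d)⁻¹
      * ∑ ξ : Lam d L, g / Real.sqrt (omega d L ξ ^ 2 + g ^ 2 * Δ ^ 2))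
    (a : ℝ)
    (ha : a = ((L : ℝ) ^ d)⁻¹
      * ∑ ξ : Lam d L, omega d L ξ ^ 2 / (omega d L ξ ^ 2 + (g / 2) ^ 2)) :
    1 - 4 * Δ ^ 2 ≥ a / (1 + a) ∧ a / (1 + a) ≥ a / 2 := by
  obtain ⟨hΔ0, hΔhalf⟩ := hΔ
  have hL0 : (0 : ℝ) < L := by exact_mod_cast (NeZero.pos L)
  set N : ℝ := (L : ℝ) ^ d with hN
  have hN0 : (0 : ℝ) < N := by positivity
  have hcard : (Fintype.card (Lam d L) : ℝ) = N := by
    simp [Lam, ZMod.card, hN]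
  -- per-ξ denominators
  have hpos : ∀ ξ : Lam d L, 0 < omega d L ξ ^ 2 + g ^ 2 * Δ ^ 2 := by
    intro ξ
    have := mul_pos (pow_pos hg 2) (pow_pos hΔ0 2)
    nlinarith [sq_nonneg (omega d L ξ)]
  have hpos2 : ∀ ξ : Lam d L, 0 < omega d L ξ ^ 2 + (g / 2) ^ 2 := by
    intro ξ; nlinarith [sq_nonneg (omega d L ξ)]
  -- bounds on a
  have ha0 : 0 ≤ a := by
    rw [ha]
    apply mul_nonneg (by positivity)
    apply Finset.sum_nonneg
    intro ξ _
    exact div_nonneg (sq_nonneg _) (le_of_lt (hpos2 ξ))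
  have ha1 : a ≤ 1 := by
    rw [ha]
    rw [inv_mul_le_iff₀ hN0, mul_one]
    calc ∑ ξ : Lam d L, omega d L ξ ^ 2 / (omega d L ξ ^ 2 + (g / 2) ^ 2)
        ≤ ∑ _ξ : Lam d L, (1 : ℝ) := by
          apply Finset.sum_le_sum
          intro ξ _
          rw [div_le_one (hpos2 ξ)]
          nlinarith [sq_nonneg (g / 2)]
      _ = N := by simp [hcard, hN]
  -- key inequality: 4Δ² ≤ 1 - a
  have key : 4 * Δ ^ 2 ≤ 1 - a := by
    have h2 : Δ * 2 = N⁻¹ * ∑ ξ : Lam d L, Δ * (g / Real.sqrt (omega d L ξ ^ 2 + g ^ 2 * Δ ^ 2)) := by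
      rw [← Finset.mul_sum, hgap]; ring
    have hCS : (∑ ξ : Lam d L, Δ * (g / Real.sqrt (omega d L ξ ^ 2 + g ^ 2 * Δ ^ 2))) ^ 2
        ≤ N * ∑ ξ : Lam d L, (Δ * (g / Real.sqrt (omega d L ξ ^ 2 + g ^ 2 * Δ ^ 2))) ^ 2 := by
      have := sq_sum_le_card_mul_sum_sq
        (s := (Finset.univ : Finset (Lam d L)))
        (f := fun ξ => Δ * (g / Real.sqrt (omega d L ξ ^ 2 + g ^ 2 * Δ ^ 2)))
      simpa [hcard] using this
    have hterm : ∀ ξ : Lam d L,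
        (Δ * (g / Real.sqrt (omega d L ξ ^ 2 + g ^ 2 * Δ ^ 2))) ^ 2
          ≤ 1 - omega d L ξ ^ 2 / (omega d L ξ ^ 2 + (g / 2) ^ 2) := by
      intro ξ
      have hp := hpos ξ
      have hp2 := hpos2 ξ
      have hsq : Real.sqrt (omega d L ξ ^ 2 + g ^ 2 * Δ ^ 2) ^ 2
          = omega d L ξ ^ 2 + g ^ 2 * Δ ^ 2 := Real.sq_sqrt hp.le
      have h1 : (Δ * (g / Real.sqrt (omega d L ξ ^ 2 + g ^ 2 * Δ ^ 2))) ^ 2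
          = g ^ 2 * Δ ^ 2 / (omega d L ξ ^ 2 + g ^ 2 * Δ ^ 2) := by
        rw [mul_pow, div_pow, hsq]; ring
      rw [h1]
      have h2' : g ^ 2 * Δ ^ 2 / (omega d L ξ ^ 2 + g ^ 2 * Δ ^ 2)
          = 1 - omega d L ξ ^ 2 / (omega d L ξ ^ 2 + g ^ 2 * Δ ^ 2) := by
        field_simp
        ring
      rw [h2']
      have hle : omega d L ξ ^ 2 / (omega d L ξ ^ 2 + (g / 2) ^ 2)
          ≤ omega d L ξ ^ 2 / (omega d L ξ ^ 2 + g ^ 2 * Δ ^ 2) := by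
        apply div_le_div_of_nonneg_left (sq_nonneg _) hp
        have hΔsq : Δ ^ 2 ≤ (1/2) ^ 2 := by nlinarith
        nlinarith [mul_le_mul_of_nonneg_left hΔsq (sq_nonneg g)]
      linarith
    have hsum : ∑ ξ : Lam d L, (Δ * (g / Real.sqrt (omega d L ξ ^ 2 + g ^ 2 * Δ ^ 2))) ^ 2
        ≤ N - N * a := by
      calc ∑ ξ : Lam d L, (Δ * (g / Real.sqrt (omega d L ξ ^ 2 + g ^ 2 * Δ ^ 2))) ^ 2
          ≤ ∑ ξ : Lam d L, (1 - omega d L ξ ^ 2 / (omega d L ξ ^ 2 + (g / 2) ^ 2)) :=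
            Finset.sum_le_sum fun ξ _ => hterm ξ
        _ = N - N * a := by
            rw [Finset.sum_sub_distrib]
            rw [ha]
            field_simp [hcard]
            rw [Finset.sum_const, Finset.card_univ, nsmul_eq_mul, mul_one, hcard]
            congr 1
            exact Finset.sum_congr rfl fun x _ => by ring
    have : (Δ * 2) ^ 2 ≤ 1 - a := by
      rw [h2, mul_pow]
      calc N⁻¹ ^ 2 * (∑ ξ : Lam d L, Δ * (g / Real.sqrt (omega d L ξ ^ 2 + g ^ 2 * Δ ^ 2))) ^ 2
          ≤ N⁻¹ ^ 2 * (N * (N - N * a)) := by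
            apply mul_le_mul_of_nonneg_left _ (by positivity)
            exact le_trans hCS (mul_le_mul_of_nonneg_left hsum hN0.le)
        _ = 1 - a := by field_simp
    calc 4 * Δ ^ 2 = (Δ * 2) ^ 2 := by ring
      _ ≤ 1 - a := this
  constructor
  · have h1 : a / (1 + a) ≤ a := by
      apply div_le_self ha0; linarith
    linarith
  · rw [ge_iff_le, div_le_div_iff₀ (by norm_num) (by linarith)]
    have h : a * a ≤ a := by simpa using mul_le_mul_of_nonneg_left ha1 ha0
    calc a * (1 + a) = a * a + a := by ring
      _ ≤ a + a := by linarith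
      _ = a * 2 := by ring
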